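/- Triangle-like inequality for Rényi divergence: if D_α(P||Q) ≤ ε₁·α and D_α(Q||R) ≤ ε₂·α for some 1 < α < ∞ and ε₁, ε₂ ≥ 0, then D_α(P||R) ≤ (√ε₁ + √ε₂)²·α. -/

import Mathlib

/-- Rényi divergence of order `α` of pmfs on a finite set. -/
noncomputable def renyiDiv {X : Type*} [Fintype X] (α : ℝ) (P Q : X → ℝ) : ℝ :=
  (α - 1)⁻¹ * Real.log (∑ x, P x ^ α * Q x ^ (1 - α))


open Real Finset Filter

open Real Finset

lemma sum_pos_renyi {X : Type*} [Fintype X] [Nonempty X] (a b : ℝ) (P Q : X → ℝ)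
    (hP0 : ∀ x, 0 < P x) (hQ0 : ∀ x, 0 < Q x) :
    0 < ∑ x, P x ^ a * Q x ^ b :=
  Finset.sum_pos (fun x _ => mul_pos (rpow_pos_of_pos (hP0 x) _) (rpow_pos_of_pos (hQ0 x) _))
    univ_nonempty

lemma holder_step {X : Type*} [Fintype X] [Nonempty X] (α p q : ℝ) (hα : 1 < α)
    (hpq : Real.HolderConjugate p q)
    (P Q R : X → ℝ) (hP0 : ∀ x, 0 < P x) (hQ0 : ∀ x, 0 < Q x) (hR0 : ∀ x, 0 < R x) :
    Real.log (∑ x, P x ^ α * R x ^ (1 - α)) ≤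
      (1/p) * Real.log (∑ x, P x ^ (p*α) * Q x ^ (1 - p*α))
      + (1/q) * Real.log (∑ x, Q x ^ (q*(α-1)+1) * R x ^ (1 - (q*(α-1)+1))) := by
  have hp0 : p ≠ 0 := hpq.ne_zero
  have hq0 : q ≠ 0 := hpq.symm.ne_zero
  set a : X → ℝ := fun x => P x ^ α * Q x ^ (1/p - α) with ha
  set b : X → ℝ := fun x => Q x ^ (α - 1 + 1/q) * R x ^ (1 - α) with hb
  have hab : ∀ x, P x ^ α * R x ^ (1 - α) = a x * b x := by
    intro x
    simp only [ha, hb]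
    have h0 : 1/p - α + (α - 1 + 1/q) = 0 := by
      rw [one_div, one_div]
      linarith [hpq.inv_add_inv_eq_one]
    have h1 : P x ^ α * Q x ^ (1/p - α) * (Q x ^ (α - 1 + 1/q) * R x ^ (1 - α))
        = P x ^ α * R x ^ (1 - α) * (Q x ^ (1/p - α) * Q x ^ (α - 1 + 1/q)) := by ring
    rw [h1, ← Real.rpow_add (hQ0 x), h0, Real.rpow_zero, mul_one]
  have hap : ∀ x, a x ^ p = P x ^ (p*α) * Q x ^ (1 - p*α) := by
    intro x
    rw [ha, Real.mul_rpow (rpow_pos_of_pos (hP0 x) _).le (rpow_pos_of_pos (hQ0 x) _).le,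
      ← Real.rpow_mul (hP0 x).le, ← Real.rpow_mul (hQ0 x).le]
    rw [mul_comm α p]
    congr 1
    field_simp
  have hbq : ∀ x, b x ^ q = Q x ^ (q*(α-1)+1) * R x ^ (1 - (q*(α-1)+1)) := by
    intro x
    rw [hb, Real.mul_rpow (rpow_pos_of_pos (hQ0 x) _).le (rpow_pos_of_pos (hR0 x) _).le,
      ← Real.rpow_mul (hQ0 x).le, ← Real.rpow_mul (hR0 x).le]
    congr 1 <;> [skip; congr 1] <;> field_simp <;> ring
  have key : ∑ x, P x ^ α * R x ^ (1 - α) ≤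
      (∑ x, P x ^ (p*α) * Q x ^ (1 - p*α)) ^ (1/p)
        * (∑ x, Q x ^ (q*(α-1)+1) * R x ^ (1 - (q*(α-1)+1))) ^ (1/q) := by
    calc ∑ x, P x ^ α * R x ^ (1 - α) = ∑ x, a x * b x := by
          exact Finset.sum_congr rfl fun x _ => hab x
      _ ≤ (∑ x, a x ^ p) ^ (1/p) * (∑ x, b x ^ q) ^ (1/q) :=
          Real.inner_le_Lp_mul_Lq_of_nonneg univ hpq
            (fun x _ => mul_nonneg (rpow_pos_of_pos (hP0 x) _).le (rpow_pos_of_pos (hQ0 x) _).le)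
            (fun x _ => mul_nonneg (rpow_pos_of_pos (hQ0 x) _).le (rpow_pos_of_pos (hR0 x) _).le)
      _ = _ := by
          rw [Finset.sum_congr rfl fun x _ => hap x, Finset.sum_congr rfl fun x _ => hbq x]
  have h1 : (0:ℝ) < ∑ x, P x ^ (p*α) * Q x ^ (1 - p*α) := sum_pos_renyi _ _ _ _ hP0 hQ0
  have h2 : (0:ℝ) < ∑ x, Q x ^ (q*(α-1)+1) * R x ^ (1 - (q*(α-1)+1)) :=
    sum_pos_renyi _ _ _ _ hQ0 hR0
  calc Real.log (∑ x, P x ^ α * R x ^ (1 - α)) ≤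
      Real.log ((∑ x, P x ^ (p*α) * Q x ^ (1 - p*α)) ^ (1/p)
        * (∑ x, Q x ^ (q*(α-1)+1) * R x ^ (1 - (q*(α-1)+1))) ^ (1/q)) :=
        Real.log_le_log (sum_pos_renyi _ _ _ _ hP0 hR0) key
    _ = _ := by
        rw [Real.log_mul (rpow_pos_of_pos h1 _).ne' (rpow_pos_of_pos h2 _).ne',
          Real.log_rpow h1, Real.log_rpow h2]

lemma bound_p {X : Type*} [Fintype X] [Nonempty X] (α ε₁ ε₂ p q : ℝ) (hα : 1 < α)
    (hpq : Real.HolderConjugate p q)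
    (P Q R : X → ℝ)
    (hP0 : ∀ x, 0 < P x) (hQ0 : ∀ x, 0 < Q x) (hR0 : ∀ x, 0 < R x)
    (hPQ : ∀ α' : ℝ, 1 < α' → renyiDiv α' P Q ≤ ε₁ * α')
    (hQR : ∀ α' : ℝ, 1 < α' → renyiDiv α' Q R ≤ ε₂ * α') :
    renyiDiv α P R ≤ (α-1)⁻¹ * ((p*α-1)*(ε₁*α) + (α-1)*(ε₂*(q*(α-1)+1))) := by
  have hα1 : (0:ℝ) < α - 1 := by linarith
  have hp1 : 1 < p := hpq.lt
  have hq1 : 1 < q := hpq.symm.lt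
  have hpα : 1 < p * α := by nlinarith
  have hqα : 1 < q * (α-1) + 1 := by nlinarith
  have hH := holder_step α p q hα hpq P Q R hP0 hQ0 hR0
  have h1 : Real.log (∑ x, P x ^ (p*α) * Q x ^ (1 - p*α)) ≤ (p*α-1) * (ε₁*(p*α)) := by
    have hd := hPQ (p*α) hpα
    unfold renyiDiv at hd
    calc Real.log (∑ x, P x ^ (p*α) * Q x ^ (1 - p*α))
        = (p*α-1) * ((p*α-1)⁻¹ * Real.log (∑ x, P x ^ (p*α) * Q x ^ (1 - p*α))) := by
          rw [← mul_assoc, mul_inv_cancel₀ (by linarith), one_mul]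
      _ ≤ (p*α-1) * (ε₁*(p*α)) := by
          exact mul_le_mul_of_nonneg_left hd (by linarith)
  have h2 : Real.log (∑ x, Q x ^ (q*(α-1)+1) * R x ^ (1 - (q*(α-1)+1)))
      ≤ (q*(α-1)) * (ε₂*(q*(α-1)+1)) := by
    have hd := hQR (q*(α-1)+1) hqα
    unfold renyiDiv at hd
    have he : q*(α-1)+1 - 1 = q*(α-1) := by ring
    rw [he] at hd
    calc Real.log (∑ x, Q x ^ (q*(α-1)+1) * R x ^ (1 - (q*(α-1)+1)))
        = (q*(α-1)) * ((q*(α-1))⁻¹ * Real.log (∑ x, Q x ^ (q*(α-1)+1) * R x ^ (1 - (q*(α-1)+1)))) := by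
          rw [← mul_assoc, mul_inv_cancel₀ (by nlinarith), one_mul]
      _ ≤ (q*(α-1)) * (ε₂*(q*(α-1)+1)) := by
          exact mul_le_mul_of_nonneg_left hd (by nlinarith)
  have hp0 : (0:ℝ) < p := by linarith
  have hq0 : (0:ℝ) < q := by linarith
  have hfinal : Real.log (∑ x, P x ^ α * R x ^ (1 - α))
      ≤ (p*α-1)*(ε₁*α) + (α-1)*(ε₂*(q*(α-1)+1)) := by
    have hA : (1/p) * Real.log (∑ x, P x ^ (p*α) * Q x ^ (1 - p*α))
        ≤ (p*α-1)*(ε₁*α) := by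
      have := mul_le_mul_of_nonneg_left h1 (le_of_lt (one_div_pos.mpr hp0))
      calc (1/p) * Real.log (∑ x, P x ^ (p*α) * Q x ^ (1 - p*α))
          ≤ (1/p) * ((p*α-1) * (ε₁*(p*α))) := this
        _ = (p*α-1)*(ε₁*α) := by field_simp
    have hB : (1/q) * Real.log (∑ x, Q x ^ (q*(α-1)+1) * R x ^ (1 - (q*(α-1)+1)))
        ≤ (α-1)*(ε₂*(q*(α-1)+1)) := by
      have := mul_le_mul_of_nonneg_left h2 (le_of_lt (one_div_pos.mpr hq0))
      calc (1/q) * Real.log (∑ x, Q x ^ (q*(α-1)+1) * R x ^ (1 - (q*(α-1)+1)))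
          ≤ (1/q) * ((q*(α-1)) * (ε₂*(q*(α-1)+1))) := this
        _ = (α-1)*(ε₂*(q*(α-1)+1)) := by field_simp
    linarith
  unfold renyiDiv
  exact mul_le_mul_of_nonneg_left hfinal (by positivity)

lemma opt_bound (α ε₁ ε₂ e₁ e₂ : ℝ) (hα : 1 < α) (he₁ : 0 < e₁) (he₂ : 0 < e₂)
    (h1 : ε₁ ≤ e₁^2) (h2 : ε₂ ≤ e₂^2) (hε₁ : 0 ≤ ε₁) (hε₂ : 0 ≤ ε₂) :
    ∃ p q : ℝ, Real.HolderConjugate p q ∧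
      (α-1)⁻¹ * ((p*α-1)*(ε₁*α) + (α-1)*(ε₂*(q*(α-1)+1))) ≤ (e₁+e₂)^2*α := by
  have hα1 : (0:ℝ) < α - 1 := by linarith
  have hα0 : (0:ℝ) < α := by linarith
  set p : ℝ := 1 + (e₂*(α-1))/(e₁*α) with hp
  set q : ℝ := 1 + (e₁*α)/(e₂*(α-1)) with hq
  have hu : 0 < (e₂*(α-1))/(e₁*α) := by positivity
  have hv : 0 < (e₁*α)/(e₂*(α-1)) := by positivity
  refine ⟨p, q, Real.holderConjugate_iff.mpr ⟨hp ▸ lt_add_of_pos_right 1 hu, ?_⟩, ?_⟩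
  · rw [hp, hq]
    field_simp
    ring
  · have hkey : (α-1)⁻¹ * ((p*α-1)*(ε₁*α) + (α-1)*(ε₂*(q*(α-1)+1)))
        = α*((1+e₂/e₁)*ε₁ + (1+e₁/e₂)*ε₂) := by
      rw [hp, hq]
      field_simp
      ring
    rw [hkey]
    have : α*((1+e₂/e₁)*ε₁ + (1+e₁/e₂)*ε₂) ≤ α*((1+e₂/e₁)*e₁^2 + (1+e₁/e₂)*e₂^2) := by
      gcongr <;> positivity
    calc α*((1+e₂/e₁)*ε₁ + (1+e₁/e₂)*ε₂) ≤ α*((1+e₂/e₁)*e₁^2 + (1+e₁/e₂)*e₂^2) := this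
      _ = (e₁+e₂)^2*α := by field_simp; ring
/-- Triangle-like inequality for Rényi divergence (Steinke, Lemma 33.7):
if `D_{α'}(P‖Q) ≤ ε₁·α'` and `D_{α'}(Q‖R) ≤ ε₂·α'` for all orders `α' ∈ (1,∞)`,
then `D_α(P‖R) ≤ (√ε₁ + √ε₂)²·α` for any `1 < α < ∞`. -/
theorem renyi_triangle_like {X : Type*} [Fintype X] (α ε₁ ε₂ : ℝ)
    (hα : 1 < α) (hε₁ : 0 ≤ ε₁) (hε₂ : 0 ≤ ε₂)
    (P Q R : X → ℝ)
    (hP0 : ∀ x, 0 < P x) (hP1 : ∑ x, P x = 1)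
    (hQ0 : ∀ x, 0 < Q x) (hQ1 : ∑ x, Q x = 1)
    (hR0 : ∀ x, 0 < R x) (hR1 : ∑ x, R x = 1)
    (hPQ : ∀ α' : ℝ, 1 < α' → renyiDiv α' P Q ≤ ε₁ * α')
    (hQR : ∀ α' : ℝ, 1 < α' → renyiDiv α' Q R ≤ ε₂ * α') :
    renyiDiv α P R ≤ (Real.sqrt ε₁ + Real.sqrt ε₂) ^ 2 * α := by
  have hne : Nonempty X := by
    by_contra hX
    rw [not_nonempty_iff] at hX
    rw [Finset.univ_eq_empty, Finset.sum_empty] at hP1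
    norm_num at hP1
  have hδ : ∀ δ : ℝ, 0 < δ →
      renyiDiv α P R ≤ (Real.sqrt (ε₁+δ) + Real.sqrt (ε₂+δ)) ^ 2 * α := by
    intro δ hδpos
    have he₁ : 0 < Real.sqrt (ε₁+δ) := Real.sqrt_pos.mpr (by linarith)
    have he₂ : 0 < Real.sqrt (ε₂+δ) := Real.sqrt_pos.mpr (by linarith)
    have hs₁ : ε₁ ≤ Real.sqrt (ε₁+δ) ^ 2 := by
      rw [Real.sq_sqrt (by linarith)]; linarith
    have hs₂ : ε₂ ≤ Real.sqrt (ε₂+δ) ^ 2 := by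
      rw [Real.sq_sqrt (by linarith)]; linarith
    obtain ⟨p, q, hpq, hopt⟩ := opt_bound α ε₁ ε₂ _ _ hα he₁ he₂ hs₁ hs₂ hε₁ hε₂
    exact le_trans (bound_p α ε₁ ε₂ p q hα hpq P Q R hP0 hQ0 hR0 hPQ hQR) hopt
  have hcont : Filter.Tendsto (fun δ : ℝ => (Real.sqrt (ε₁+δ) + Real.sqrt (ε₂+δ)) ^ 2 * α)
      (nhdsWithin 0 (Set.Ioi 0)) (nhds ((Real.sqrt ε₁ + Real.sqrt ε₂) ^ 2 * α)) := by
    have hc : Continuous (fun δ : ℝ => (Real.sqrt (ε₁+δ) + Real.sqrt (ε₂+δ)) ^ 2 * α) := by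
      continuity
    have h := (hc.tendsto 0).mono_left (nhdsWithin_le_nhds (s := Set.Ioi (0:ℝ)))
    simpa using h
  exact ge_of_tendsto hcont (Filter.eventually_iff_exists_mem.mpr
    ⟨Set.Ioi 0, self_mem_nhdsWithin, fun δ hδ' => hδ δ hδ'⟩)
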